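/- For every x, m ∈ [0,1] and λ ∈ ℝ, there exists γ ∈ ℝ (depending only on m and λ), namely γ = e^{−mλ − λ²/8}(e^λ − 1) when λ ≥ 0, such that exp(λ(x − m) − λ²/8) ≤ 1 + γ(x − m) for all x ∈ [0,1]. -/

import Mathlib

open Real

private lemma hoeffding_scalar (m lam : ℝ) (hm0 : 0 ≤ m) (hm1 : m ≤ 1) (hl : 0 ≤ lam) :
    1 - m + m * Real.exp lam ≤ Real.exp (m * lam + lam ^ 2 / 8) := by
  set u : ℝ → ℝ := fun x => 1 - m + m * Real.exp x with hu_def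
  have hu1 : ∀ x : ℝ, 0 ≤ x → 1 ≤ u x := by
    intro x hx
    have h1 : 1 ≤ Real.exp x := Real.one_le_exp hx
    simp only [hu_def]; nlinarith
  have hupos : ∀ x : ℝ, 0 ≤ x → 0 < u x := fun x hx => lt_of_lt_of_le one_pos (hu1 x hx)
  set F : ℝ → ℝ := fun x => m * x + x ^ 2 / 8 - Real.log (u x) with hF_def
  set G : ℝ → ℝ := fun x => m + x / 4 - m * Real.exp x / u x with hG_def
  have hderivu : ∀ x : ℝ, HasDerivAt u (m * Real.exp x) x := by
    intro x
    have h2 : HasDerivAt (fun y : ℝ => m * Real.exp y) (m * Real.exp x) x :=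
      (Real.hasDerivAt_exp x).const_mul m
    simpa [hu_def] using h2.const_add (1 - m)
  have hderivF : ∀ x : ℝ, 0 ≤ x → HasDerivAt F (G x) x := by
    intro x hx
    have h1 : HasDerivAt (fun y : ℝ => Real.log (u y)) (m * Real.exp x / u x) x :=
      (hderivu x).log (ne_of_gt (hupos x hx))
    have ha : HasDerivAt (fun y : ℝ => m * y) m x := by simpa using (hasDerivAt_id x).const_mul m
    have hb : HasDerivAt (fun y : ℝ => y ^ 2 / 8) (2 * x / 8) x :=
      (by simpa using (hasDerivAt_pow 2 x) : HasDerivAt (fun y : ℝ => y ^ 2) (2 * x) x).div_const 8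
    have h2 : HasDerivAt (fun y : ℝ => m * y + y ^ 2 / 8) (m + x / 4) x := by
      have := ha.add hb
      exact this.congr_deriv (by ring)
    simpa [hF_def, hG_def, Pi.sub_def] using h2.sub h1
  have hderivG : ∀ x : ℝ, 0 ≤ x →
      HasDerivAt G (1 / 4 - m * (1 - m) * Real.exp x / (u x) ^ 2) x := by
    intro x hx
    have hne : u x ≠ 0 := ne_of_gt (hupos x hx)
    have h1 : HasDerivAt (fun y : ℝ => m * Real.exp y) (m * Real.exp x) x :=
      (Real.hasDerivAt_exp x).const_mul m
    have h2 : HasDerivAt (fun y : ℝ => m * Real.exp y / u y)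
        ((m * Real.exp x * u x - m * Real.exp x * (m * Real.exp x)) / (u x) ^ 2) x :=
      h1.div (hderivu x) hne
    have h3 : HasDerivAt (fun y : ℝ => m + y / 4) (1 / 4) x := by
      simpa using ((hasDerivAt_id x).div_const 4).const_add m
    have hnum : m * Real.exp x * u x - m * Real.exp x * (m * Real.exp x)
        = m * (1 - m) * Real.exp x := by
      simp only [hu_def]; ring
    have h4 := h3.sub h2
    rw [hnum] at h4
    simpa [hG_def, sub_div, Pi.sub_def] using h4
  -- G is monotone on [0,∞), G 0 = 0, so G ≥ 0 there
  have hG0 : G 0 = 0 := by simp [hG_def, hu_def]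
  have hGnonneg : ∀ x : ℝ, 0 ≤ x → 0 ≤ G x := by
    intro x hx
    have hmono : MonotoneOn G (Set.Ici 0) := by
      apply monotoneOn_of_deriv_nonneg (convex_Ici 0)
      · exact fun y hy => ((hderivG y hy).continuousAt).continuousWithinAt
      · intro y hy
        rw [interior_Ici] at hy
        exact ((hderivG y (le_of_lt hy)).differentiableAt).differentiableWithinAt
      · intro y hy
        rw [interior_Ici] at hy
        rw [(hderivG y (le_of_lt hy)).deriv]
        have huy := hu1 y (le_of_lt hy)
        have he : 0 < Real.exp y := Real.exp_pos y
        have key : m * (1 - m) * Real.exp y ≤ (u y) ^ 2 / 4 := by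
          simp only [hu_def]
          nlinarith [sq_nonneg (1 - m - m * Real.exp y)]
        have hu2 : (0:ℝ) < (u y) ^ 2 := by positivity
        rw [sub_nonneg, div_le_iff₀ hu2]
        nlinarith
    have := hmono (Set.self_mem_Ici) (Set.mem_Ici.mpr hx) hx
    rwa [hG0] at this
  -- F is monotone on [0,∞), F 0 = 0, so F lam ≥ 0
  have hF0 : F 0 = 0 := by simp [hF_def, hu_def]
  have hFlam : 0 ≤ F lam := by
    have hmono : MonotoneOn F (Set.Ici 0) := by
      apply monotoneOn_of_deriv_nonneg (convex_Ici 0)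
      · exact fun y hy => ((hderivF y hy).continuousAt).continuousWithinAt
      · intro y hy
        rw [interior_Ici] at hy
        exact ((hderivF y (le_of_lt hy)).differentiableAt).differentiableWithinAt
      · intro y hy
        rw [interior_Ici] at hy
        rw [(hderivF y (le_of_lt hy)).deriv]
        exact hGnonneg y (le_of_lt hy)
    have := hmono (Set.self_mem_Ici) (Set.mem_Ici.mpr hl) hl
    rw [hF0] at this
    exact this
  -- conclude
  have hlog : Real.log (u lam) ≤ m * lam + lam ^ 2 / 8 := by
    simp only [hF_def] at hFlam; linarith
  calc u lam = Real.exp (Real.log (u lam)) := (Real.exp_log (hupos lam hl)).symm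
    _ ≤ Real.exp (m * lam + lam ^ 2 / 8) := Real.exp_le_exp.mpr hlog

private lemma hoeffding_pos (m lam : ℝ) (hm0 : 0 ≤ m) (hm1 : m ≤ 1) (hl : 0 ≤ lam) :
    ∀ x ∈ Set.Icc (0 : ℝ) 1,
      Real.exp (lam * (x - m) - lam ^ 2 / 8) ≤
        1 + (Real.exp (-m * lam - lam ^ 2 / 8) * (Real.exp lam - 1)) * (x - m) := by
  intro x hx
  obtain ⟨hx0, hx1⟩ := hx
  set c : ℝ := Real.exp (-m * lam - lam ^ 2 / 8) with hc_def
  have hcpos : 0 < c := Real.exp_pos _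
  -- convexity of exp: exp (lam * x) ≤ (1-x) + x * exp lam
  have hconv : Real.exp (lam * x) ≤ (1 - x) + x * Real.exp lam := by
    have h := convexOn_exp.2 (Set.mem_univ (0:ℝ)) (Set.mem_univ lam)
      (by linarith : (0:ℝ) ≤ 1 - x) hx0 (by ring : (1 - x) + x = 1)
    simpa [Real.exp_zero, smul_eq_mul, mul_comm] using h
  have hsplit : Real.exp (lam * (x - m) - lam ^ 2 / 8) = c * Real.exp (lam * x) := by
    rw [hc_def, ← Real.exp_add]; ring_nf
  have hchord : Real.exp (lam * (x - m) - lam ^ 2 / 8) ≤ c * ((1 - x) + x * Real.exp lam) := by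
    rw [hsplit]
    exact mul_le_mul_of_nonneg_left hconv (le_of_lt hcpos)
  have hscalar : c * (1 - m + m * Real.exp lam) ≤ 1 := by
    have h := hoeffding_scalar m lam hm0 hm1 hl
    have : c * (1 - m + m * Real.exp lam) ≤ c * Real.exp (m * lam + lam ^ 2 / 8) :=
      mul_le_mul_of_nonneg_left h (le_of_lt hcpos)
    calc c * (1 - m + m * Real.exp lam) ≤ c * Real.exp (m * lam + lam ^ 2 / 8) := this
      _ = 1 := by rw [hc_def, ← Real.exp_add]; simp [show -m * lam - lam^2/8 + (m * lam + lam^2/8) = 0 by ring]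
  calc Real.exp (lam * (x - m) - lam ^ 2 / 8) ≤ c * ((1 - x) + x * Real.exp lam) := hchord
    _ ≤ 1 + (c * (Real.exp lam - 1)) * (x - m) := by nlinarith
  -- note: c*((1-x)+x e) = c + c(e-1)x ; 1 + c(e-1)(x-m) ; diff = 1 - c(1-m+m e) ≥ 0

theorem capital_dominates_hoeffding (m : ℝ) (hm : m ∈ Set.Icc (0 : ℝ) 1) (lam : ℝ) :
    ∃ γ : ℝ,
      (0 ≤ lam → γ = Real.exp (-m * lam - lam ^ 2 / 8) * (Real.exp lam - 1)) ∧
      ∀ x ∈ Set.Icc (0 : ℝ) 1,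
        Real.exp (lam * (x - m) - lam ^ 2 / 8) ≤ 1 + γ * (x - m) := by
  obtain ⟨hm0, hm1⟩ := hm
  by_cases hl : 0 ≤ lam
  · exact ⟨_, fun _ => rfl, hoeffding_pos m lam hm0 hm1 hl⟩
  · push_neg at hl
    refine ⟨-(Real.exp (-(1 - m) * (-lam) - (-lam) ^ 2 / 8) * (Real.exp (-lam) - 1)),
      fun h => absurd h (not_le.mpr hl), ?_⟩
    intro x hx
    obtain ⟨hx0, hx1⟩ := hx
    have hy : (1 - x) ∈ Set.Icc (0:ℝ) 1 := ⟨by linarith, by linarith⟩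
    have h := hoeffding_pos (1 - m) (-lam) (by linarith) (by linarith) (by linarith) (1 - x) hy
    have heq : -lam * ((1 - x) - (1 - m)) - (-lam) ^ 2 / 8 = lam * (x - m) - lam ^ 2 / 8 := by ring
    rw [heq] at h
    calc Real.exp (lam * (x - m) - lam ^ 2 / 8)
        ≤ 1 + (Real.exp (-(1 - m) * (-lam) - (-lam) ^ 2 / 8) * (Real.exp (-lam) - 1)) * ((1 - x) - (1 - m)) := h
      _ = 1 + (-(Real.exp (-(1 - m) * (-lam) - (-lam) ^ 2 / 8) * (Real.exp (-lam) - 1))) * (x - m) := by ring
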